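/- For all nonnegative integers n and \ell and real numbers m, r, the r-Dowling numbers satisfy D_{m,r}(n+\ell) = \sum_{j=0}^{\ell} \sum_{k=0}^{n} W_{m,r}(\ell, j) \binom{n}{k} (mj)^{n-k} D_{m,r}(k). -/

import Mathlib

/-- The r-Whitney numbers of the second kind, defined by the triangular recurrence
`W m r n k = W m r (n-1) (k-1) + (m*k+r) * W m r (n-1) k`, with `W m r 0 0 = 1`
and vanishing for `k > n` (and for "k < 0", encoded by the `n+1, 0` case). -/
noncomputable def rWhitney (m r : ℝ) : ℕ → ℕ → ℝ
  | 0, 0 => 1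
  | 0, _ + 1 => 0
  | n + 1, 0 => r * rWhitney m r n 0
  | n + 1, k + 1 => rWhitney m r n k + (m * (k + 1) + r) * rWhitney m r n (k + 1)
/-- The r-Dowling number: the sum over k ≤ n of `W m r n k`. -/
noncomputable def rDowlingNum (m r : ℝ) (n : ℕ) : ℝ :=
  ∑ k ∈ Finset.range (n + 1), rWhitney m r n k

open Finset

lemma rWhitney_zero_right (m r : ℝ) (n : ℕ) :
    rWhitney m r (n+1) 0 = r * rWhitney m r n 0 := by
  simp [rWhitney]

lemma rWhitney_succ (m r : ℝ) (n k : ℕ) :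
    rWhitney m r (n+1) (k+1)
      = rWhitney m r n k + (m * (k + 1) + r) * rWhitney m r n (k + 1) := by
  simp [rWhitney]

lemma rWhitney_eq_zero (m r : ℝ) : ∀ n k, n < k → rWhitney m r n k = 0 := by
  intro n
  induction n with
  | zero =>
    intro k hk
    match k, hk with
    | k+1, _ => simp [rWhitney]
  | succ n ih =>
    intro k hk
    match k, hk with
    | k+1, hk =>
      rw [rWhitney_succ, ih k (by omega), ih (k+1) (by omega)]
      ring

lemma Tsucc (m r : ℝ) (n k : ℕ) :
    ∑ i ∈ range (n+2), ((n+1).choose i : ℝ) * m ^ (n+1-i) * rWhitney m r i k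
      = m * ∑ i ∈ range (n+1), (n.choose i : ℝ) * m ^ (n-i) * rWhitney m r i k
        + ∑ i ∈ range (n+1), (n.choose i : ℝ) * m ^ (n-i) * rWhitney m r (i+1) k := by
  have e1 : ∀ i ∈ range (n+1), (((n+1).choose (i+1) : ℝ)) * m ^ (n+1-(i+1)) * rWhitney m r (i+1) k
      = (n.choose i : ℝ) * m ^ (n-i) * rWhitney m r (i+1) k
        + ((n.choose (i+1) : ℝ) * m ^ (n+1-(i+1)) * rWhitney m r (i+1) k) := by
    intro i hi
    rw [Nat.succ_sub_succ, Nat.choose_succ_succ']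
    push_cast; ring
  rw [Finset.sum_range_succ' (fun i => ((n+1).choose i : ℝ) * m ^ (n+1-i) * rWhitney m r i k) (n+1)]
  rw [Finset.sum_congr rfl e1, Finset.sum_add_distrib]
  have e2 : (∑ i ∈ range (n+1), (n.choose (i+1) : ℝ) * m ^ (n+1-(i+1)) * rWhitney m r (i+1) k)
      + ((n+1).choose 0 : ℝ) * m ^ (n+1-0) * rWhitney m r 0 k
      = ∑ i ∈ range (n+2), (n.choose i : ℝ) * m ^ (n+1-i) * rWhitney m r i k := by
    rw [Finset.sum_range_succ' (fun i => (n.choose i : ℝ) * m ^ (n+1-i) * rWhitney m r i k) (n+1)]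
    norm_num
  have e3 : ∑ i ∈ range (n+2), (n.choose i : ℝ) * m ^ (n+1-i) * rWhitney m r i k
      = m * ∑ i ∈ range (n+1), (n.choose i : ℝ) * m ^ (n-i) * rWhitney m r i k := by
    rw [Finset.sum_range_succ, Nat.choose_succ_self, Finset.mul_sum]
    simp only [Nat.cast_zero, zero_mul, add_zero]
    apply Finset.sum_congr rfl
    intro i hi
    have hi' : i ≤ n := by simpa using Nat.lt_succ_iff.mp (mem_range.mp hi)
    have : n+1-i = (n-i)+1 := by omega
    rw [this, pow_succ]; ring
  rw [e3] at e2
  linarith [e2]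

lemma Ulem (m r : ℝ) : ∀ n k, ∑ i ∈ range (n+1), (n.choose i : ℝ) * m ^ (n-i) * rWhitney m r i k
    = rWhitney m r n k + m * (k+1) * rWhitney m r n (k+1) := by
  intro n
  induction n with
  | zero =>
    intro k
    simp [rWhitney_eq_zero m r 0 (k+1) (by omega)]
  | succ n ih =>
    intro k
    rw [Tsucc m r n k]
    match k with
    | 0 =>
      have e : ∑ i ∈ range (n+1), (n.choose i : ℝ) * m ^ (n-i) * rWhitney m r (i+1) 0
          = r * ∑ i ∈ range (n+1), (n.choose i : ℝ) * m ^ (n-i) * rWhitney m r i 0 := by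
        rw [Finset.mul_sum]
        exact Finset.sum_congr rfl fun i _ => by rw [rWhitney_zero_right]; ring
      rw [e, ih 0, rWhitney_zero_right, rWhitney_succ m r n 0]
      push_cast; ring
    | k+1 =>
      have e : ∑ i ∈ range (n+1), (n.choose i : ℝ) * m ^ (n-i) * rWhitney m r (i+1) (k+1)
          = (∑ i ∈ range (n+1), (n.choose i : ℝ) * m ^ (n-i) * rWhitney m r i k)
            + (m * (k+1) + r) * ∑ i ∈ range (n+1), (n.choose i : ℝ) * m ^ (n-i) * rWhitney m r i (k+1) := by
        rw [Finset.mul_sum, ← Finset.sum_add_distrib]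
        exact Finset.sum_congr rfl fun i _ => by rw [rWhitney_succ]; ring
      rw [e, ih k, ih (k+1), rWhitney_succ m r n k, rWhitney_succ m r n (k+1)]
      push_cast; ring

lemma Rlem (m r : ℝ) (n : ℕ) :
    rDowlingNum m r (n+1) = r * rDowlingNum m r n
      + ∑ i ∈ range (n+1), (n.choose i : ℝ) * m ^ (n-i) * rDowlingNum m r i := by
  have hD : ∀ i, i ≤ n → ∑ k ∈ range (n+1), rWhitney m r i k = rDowlingNum m r i := by
    intro i hi
    rw [rDowlingNum]
    symm
    apply Finset.sum_subset
    · intro x hx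
      simp only [mem_range] at *
      omega
    · intro x hx hx2
      simp only [mem_range] at hx hx2
      exact rWhitney_eq_zero m r i x (by omega)
  have key : ∑ i ∈ range (n+1), (n.choose i : ℝ) * m ^ (n-i) * rDowlingNum m r i
      = ∑ k ∈ range (n+1), (rWhitney m r n k + m*(k+1)*rWhitney m r n (k+1)) := by
    calc ∑ i ∈ range (n+1), (n.choose i : ℝ) * m ^ (n-i) * rDowlingNum m r i
        = ∑ i ∈ range (n+1), ∑ k ∈ range (n+1), (n.choose i : ℝ) * m ^ (n-i) * rWhitney m r i k := by
          apply Finset.sum_congr rfl; intro i hi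
          rw [← hD i (by simp only [mem_range] at hi; omega), Finset.mul_sum]
      _ = ∑ k ∈ range (n+1), ∑ i ∈ range (n+1), (n.choose i : ℝ) * m ^ (n-i) * rWhitney m r i k :=
          Finset.sum_comm
      _ = _ := by
          apply Finset.sum_congr rfl; intro k _; exact Ulem m r n k
  rw [key, rDowlingNum, rDowlingNum]
  rw [Finset.sum_range_succ' (fun k => rWhitney m r (n+1) k) (n+1)]
  have e1 : ∀ k ∈ range (n+1), rWhitney m r (n+1) (k+1)
      = rWhitney m r n k + (m*(k+1)+r)*rWhitney m r n (k+1) := fun k _ => rWhitney_succ m r n k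
  rw [Finset.sum_congr rfl e1, rWhitney_zero_right]
  have h4 : ∑ k ∈ range (n+1), (rWhitney m r n k + (m*(k+1)+r)*rWhitney m r n (k+1))
      = ∑ k ∈ range (n+1), rWhitney m r n k
        + ∑ k ∈ range (n+1), m*(k+1)*rWhitney m r n (k+1)
        + r * ∑ k ∈ range (n+1), rWhitney m r n (k+1) := by
    rw [Finset.mul_sum, ← Finset.sum_add_distrib, ← Finset.sum_add_distrib]
    apply Finset.sum_congr rfl; intros; ring
  have h4' : ∑ k ∈ range (n+1), (rWhitney m r n k + m*(k+1)*rWhitney m r n (k+1))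
      = ∑ k ∈ range (n+1), rWhitney m r n k
        + ∑ k ∈ range (n+1), m*(k+1)*rWhitney m r n (k+1) := by
    rw [← Finset.sum_add_distrib]
  have h5 : ∑ k ∈ range (n+1), rWhitney m r n (k+1) + rWhitney m r n 0
      = ∑ k ∈ range (n+1), rWhitney m r n k := by
    have h5a := Finset.sum_range_succ' (fun k => rWhitney m r n k) (n+1)
    have h5b := Finset.sum_range_succ (fun k => rWhitney m r n k) (n+1)
    rw [rWhitney_eq_zero m r n (n+1) (by omega)] at h5b
    simp only [add_zero] at h5b
    rw [h5b] at h5a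
    linarith [h5a]
  rw [h4, h4']
  linear_combination r * h5

lemma sumsucc (x : ℝ) (f : ℕ → ℝ) (n : ℕ) :
    ∑ i ∈ range (n+2), ((n+1).choose i : ℝ) * x ^ (n+1-i) * f i
      = x * ∑ i ∈ range (n+1), (n.choose i : ℝ) * x ^ (n-i) * f i
        + ∑ i ∈ range (n+1), (n.choose i : ℝ) * x ^ (n-i) * f (i+1) := by
  have e1 : ∀ i ∈ range (n+1), (((n+1).choose (i+1) : ℝ)) * x ^ (n+1-(i+1)) * f (i+1)
      = (n.choose i : ℝ) * x ^ (n-i) * f (i+1)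
        + ((n.choose (i+1) : ℝ) * x ^ (n+1-(i+1)) * f (i+1)) := by
    intro i hi
    rw [Nat.succ_sub_succ, Nat.choose_succ_succ']
    push_cast; ring
  rw [Finset.sum_range_succ' (fun i => ((n+1).choose i : ℝ) * x ^ (n+1-i) * f i) (n+1)]
  rw [Finset.sum_congr rfl e1, Finset.sum_add_distrib]
  have e2 : (∑ i ∈ range (n+1), (n.choose (i+1) : ℝ) * x ^ (n+1-(i+1)) * f (i+1))
      + ((n+1).choose 0 : ℝ) * x ^ (n+1-0) * f 0
      = ∑ i ∈ range (n+2), (n.choose i : ℝ) * x ^ (n+1-i) * f i := by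
    rw [Finset.sum_range_succ' (fun i => (n.choose i : ℝ) * x ^ (n+1-i) * f i) (n+1)]
    norm_num
  have e3 : ∑ i ∈ range (n+2), (n.choose i : ℝ) * x ^ (n+1-i) * f i
      = x * ∑ i ∈ range (n+1), (n.choose i : ℝ) * x ^ (n-i) * f i := by
    rw [Finset.sum_range_succ, Nat.choose_succ_self, Finset.mul_sum]
    simp only [Nat.cast_zero, zero_mul, add_zero]
    apply Finset.sum_congr rfl
    intro i hi
    have hi' : i ≤ n := by simpa using Nat.lt_succ_iff.mp (mem_range.mp hi)
    have : n+1-i = (n-i)+1 := by omega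
    rw [this, pow_succ]; ring
  rw [e3] at e2
  linarith [e2]

lemma binom_aux (x m : ℝ) {n i : ℕ} (hi : i ≤ n) :
    ∑ k ∈ range (n+1), (n.choose k : ℝ) * x^(n-k) * ((k.choose i : ℝ) * m^(k-i))
      = (n.choose i : ℝ) * (x+m)^(n-i) := by
  have h1 : n+1 = i + ((n-i)+1) := by omega
  rw [h1, Finset.sum_range_add]
  have hz : ∑ k ∈ range i, (n.choose k : ℝ) * x^(n-k) * ((k.choose i : ℝ)*m^(k-i)) = 0 := by
    apply Finset.sum_eq_zero; intro k hk
    rw [Nat.choose_eq_zero_of_lt (mem_range.mp hk)]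
    simp
  rw [hz, zero_add]
  have h2 : ∀ t ∈ range ((n-i)+1),
      (n.choose (i+t) : ℝ) * x^(n-(i+t)) * (((i+t).choose i : ℝ) * m^((i+t)-i))
      = (n.choose i : ℝ) * (m^t * x^((n-i)-t) * ((n-i).choose t : ℝ)) := by
    intro t ht
    have ht' : i + t ≤ n := by simp only [mem_range] at ht; omega
    have hc : (n.choose (i+t)) * ((i+t).choose i) = n.choose i * (n-i).choose t := by
      rw [Nat.choose_mul (Nat.le_add_right i t)]
      congr 2
      omega
    have hc' : ((n.choose (i+t)) : ℝ) * ((i+t).choose i : ℝ)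
        = (n.choose i : ℝ) * ((n-i).choose t : ℝ) := by exact_mod_cast congrArg (Nat.cast (R := ℝ)) hc
    have he1 : (i+t)-i = t := by omega
    have he2 : n-(i+t) = (n-i)-t := by omega
    rw [he1, he2]
    calc (n.choose (i+t) : ℝ) * x^((n-i)-t) * (((i+t).choose i : ℝ) * m^t)
        = ((n.choose (i+t) : ℝ) * ((i+t).choose i : ℝ)) * (x^((n-i)-t) * m^t) := by ring
      _ = ((n.choose i : ℝ) * ((n-i).choose t : ℝ)) * (x^((n-i)-t) * m^t) := by rw [hc']
      _ = _ := by ring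
  rw [Finset.sum_congr rfl h2, ← Finset.mul_sum]
  congr 1
  rw [add_comm x m, add_pow]

noncomputable def auxA (m r : ℝ) (n : ℕ) (x : ℝ) : ℝ :=
  ∑ k ∈ range (n+1), (n.choose k : ℝ) * x ^ (n-k) * rDowlingNum m r k

lemma auxA_succ (m r : ℝ) (n : ℕ) (x : ℝ) :
    auxA m r (n+1) x = auxA m r n (x+m) + (x+r) * auxA m r n x := by
  rw [auxA, auxA, auxA, sumsucc x (rDowlingNum m r) n]
  have e1 : ∀ k ∈ range (n+1), (n.choose k : ℝ) * x^(n-k) * rDowlingNum m r (k+1)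
      = (n.choose k : ℝ) * x^(n-k) * (r * rDowlingNum m r k)
        + ∑ i ∈ range (n+1), (n.choose k : ℝ) * x^(n-k)
            * ((k.choose i : ℝ) * m^(k-i) * rDowlingNum m r i) := by
    intro k hk
    have hk' : k ≤ n := by simp only [mem_range] at hk; omega
    rw [Rlem]
    have ext : ∑ i ∈ range (k+1), (k.choose i : ℝ) * m^(k-i) * rDowlingNum m r i
        = ∑ i ∈ range (n+1), (k.choose i : ℝ) * m^(k-i) * rDowlingNum m r i := by
      apply Finset.sum_subset
      · intro y hy; simp only [mem_range] at *; omega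
      · intro y hy hy2
        simp only [mem_range] at hy hy2
        rw [Nat.choose_eq_zero_of_lt (by omega)]
        simp
    rw [ext, mul_add, Finset.mul_sum]
  rw [Finset.sum_congr rfl e1, Finset.sum_add_distrib]
  have e2 : ∑ k ∈ range (n+1), ∑ i ∈ range (n+1),
        (n.choose k : ℝ) * x^(n-k) * ((k.choose i : ℝ) * m^(k-i) * rDowlingNum m r i)
      = ∑ i ∈ range (n+1), (n.choose i : ℝ) * (x+m)^(n-i) * rDowlingNum m r i := by
    rw [Finset.sum_comm]
    apply Finset.sum_congr rfl
    intro i hi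
    have hi' : i ≤ n := by simp only [mem_range] at hi; omega
    calc ∑ k ∈ range (n+1), (n.choose k:ℝ)*x^(n-k)*((k.choose i:ℝ)*m^(k-i)*rDowlingNum m r i)
        = (∑ k ∈ range (n+1), (n.choose k:ℝ)*x^(n-k)*((k.choose i:ℝ)*m^(k-i))) * rDowlingNum m r i := by
          rw [Finset.sum_mul]; apply Finset.sum_congr rfl; intros; ring
      _ = _ := by rw [binom_aux x m hi']
  rw [e2]
  have e3 : ∑ k ∈ range (n+1), (n.choose k : ℝ) * x^(n-k) * (r * rDowlingNum m r k)
      = r * ∑ k ∈ range (n+1), (n.choose k : ℝ) * x^(n-k) * rDowlingNum m r k := by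
    rw [Finset.mul_sum]; apply Finset.sum_congr rfl; intros; ring
  rw [e3]; ring

lemma step_aux (m r : ℝ) (ℓ n : ℕ) :
    ∑ j ∈ range (ℓ+2), rWhitney m r (ℓ+1) j * auxA m r n (m*(j:ℝ))
      = ∑ j ∈ range (ℓ+1), rWhitney m r ℓ j * auxA m r n (m*(j:ℝ)+m)
        + ∑ j ∈ range (ℓ+1), (m*(j:ℝ)+r) * rWhitney m r ℓ j * auxA m r n (m*(j:ℝ)) := by
  rw [Finset.sum_range_succ' (fun j => rWhitney m r (ℓ+1) j * auxA m r n (m*(j:ℝ))) (ℓ+1)]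
  have e1 : ∀ j ∈ range (ℓ+1), rWhitney m r (ℓ+1) (j+1) * auxA m r n (m*((j+1 : ℕ):ℝ))
      = rWhitney m r ℓ j * auxA m r n (m*(j:ℝ)+m)
        + (m*((j+1:ℕ):ℝ)+r) * rWhitney m r ℓ (j+1) * auxA m r n (m*((j+1:ℕ):ℝ)) := by
    intro j hj
    have hc : ((j+1 : ℕ):ℝ) = (j:ℝ)+1 := by push_cast; ring
    rw [rWhitney_succ, hc]
    have hm : m*((j:ℝ)+1) = m*(j:ℝ)+m := by ring
    rw [hm]
    ring
  rw [Finset.sum_congr rfl e1, Finset.sum_add_distrib]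
  have e2 : (∑ j ∈ range (ℓ+1),
        (m*((j+1:ℕ):ℝ)+r) * rWhitney m r ℓ (j+1) * auxA m r n (m*((j+1:ℕ):ℝ)))
      + rWhitney m r (ℓ+1) 0 * auxA m r n (m*((0:ℕ):ℝ))
      = ∑ j ∈ range (ℓ+1), (m*(j:ℝ)+r) * rWhitney m r ℓ j * auxA m r n (m*(j:ℝ)) := by
    have h1 := Finset.sum_range_succ'
      (fun j => (m*(j:ℝ)+r) * rWhitney m r ℓ j * auxA m r n (m*(j:ℝ))) (ℓ+1)
    have h2 := Finset.sum_range_succ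
      (fun j => (m*(j:ℝ)+r) * rWhitney m r ℓ j * auxA m r n (m*(j:ℝ))) (ℓ+1)
    rw [rWhitney_eq_zero m r ℓ (ℓ+1) (by omega)] at h2
    simp only [mul_zero, zero_mul, add_zero] at h2
    rw [h2] at h1
    simp only [Nat.cast_zero, mul_zero, zero_add] at h1 ⊢
    rw [rWhitney_zero_right]
    linarith [h1]
  linarith [e2]

theorem rDowlingNum_spivey (n ℓ : ℕ) (m r : ℝ) :
    rDowlingNum m r (n + ℓ) =
      ∑ j ∈ Finset.range (ℓ + 1), ∑ k ∈ Finset.range (n + 1),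
        rWhitney m r ℓ j * (n.choose k : ℝ) * (m * j) ^ (n - k) *
          rDowlingNum m r k := by
  induction n generalizing ℓ with
  | zero =>
    simp [rDowlingNum, rWhitney]
  | succ n ih =>
    have hL : n + 1 + ℓ = n + (ℓ + 1) := by omega
    rw [hL, ih (ℓ+1)]
    have hA : ∀ j ∈ range (ℓ+2),
        (∑ k ∈ range (n+1), rWhitney m r (ℓ+1) j * (n.choose k : ℝ) * (m*(j:ℝ))^(n-k)
          * rDowlingNum m r k)
        = rWhitney m r (ℓ+1) j * auxA m r n (m*(j:ℝ)) := by
      intro j _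
      rw [auxA, Finset.mul_sum]
      exact Finset.sum_congr rfl fun k _ => by ring
    rw [Finset.sum_congr rfl hA, step_aux m r ℓ n]
    have hB : ∀ j ∈ range (ℓ+1),
        (∑ k ∈ range (n+2), rWhitney m r ℓ j * ((n+1).choose k : ℝ) * (m*(j:ℝ))^(n+1-k)
          * rDowlingNum m r k)
        = rWhitney m r ℓ j * auxA m r (n+1) (m*(j:ℝ)) := by
      intro j _
      rw [auxA, Finset.mul_sum]
      exact Finset.sum_congr rfl fun k _ => by ring
    rw [Finset.sum_congr rfl hB]
    rw [← Finset.sum_add_distrib]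
    refine Finset.sum_congr rfl fun j hj => ?_
    rw [auxA_succ m r n (m*(j:ℝ))]
    ring
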